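/- If a family F of non-constant entire functions satisfies that {f(z) : f ∈ F} is countable for every z ∈ ℂ, and 2^ℵ₀ > ℵ₁, then F is countable. -/

import Mathlib

open Cardinal Set Filter Topology

/-- Two distinct entire functions agree on a countable set. -/
lemma countable_agreement {f g : ℂ → ℂ} (hf : Differentiable ℂ f)
    (hg : Differentiable ℂ g) (hfg : f ≠ g) :
    Set.Countable {z : ℂ | f z = g z} := by
  set s : Set ℂ := {z : ℂ | f z = g z} with hs
  have hdisc : DiscreteTopology s := by
    rw [discreteTopology_subtype_iff]
    intro x hx
    by_contra h
    have hne : (𝓝[≠] x ⊓ 𝓟 s).NeBot := ⟨h⟩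
    have hfreq : ∃ᶠ z in 𝓝[≠] x, f z = g z := by
      rwa [frequently_iff_neBot]
    exact hfg (AnalyticOnNhd.eq_of_frequently_eq
      (Complex.analyticOnNhd_univ_iff_differentiable.mpr hf) (Complex.analyticOnNhd_univ_iff_differentiable.mpr hg) hfreq)
  have : Countable s :=
    TopologicalSpace.separableSpace_iff_countable.mp inferInstance
  exact Set.countable_coe_iff.mp this

theorem erdos_wetzel_dixon (F : Set (ℂ → ℂ))
    (hdiff : ∀ f ∈ F, Differentiable ℂ f)
    (hnc : ∀ f ∈ F, ∀ c : ℂ, f ≠ fun _ => c)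
    (hcount : ∀ z : ℂ, Set.Countable ((fun f : ℂ → ℂ => f z) '' F))
    (hC : Cardinal.aleph 1 < Cardinal.continuum) :
    F.Countable := by
  have hC0 : (ℵ_ 1 : Cardinal.{0}) < Cardinal.continuum.{0} := by
    rw [← Cardinal.lift_lt.{0}, Cardinal.lift_aleph, Cardinal.lift_continuum, Ordinal.lift_one]
    exact hC
  by_contra hF
  -- extract a subfamily of cardinality ℵ₁
  have h1 : (ℵ_ 1) ≤ #F := by
    rw [Cardinal.countable_iff_lt_aleph_one, not_lt] at hF
    exact hF
  obtain ⟨S, hSF, hS⟩ := Cardinal.le_mk_iff_exists_subset.mp h1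
  -- the union of all agreement sets of pairs from S
  set B : Set ℂ := ⋃ p : S × S, {z : ℂ | (p.1 : ℂ → ℂ) z = (p.2 : ℂ → ℂ) z ∧ (p.1 : ℂ → ℂ) ≠ p.2}
    with hB
  have hBsmall : #B < 𝔠 := by
    have hle : #B ≤ #(S × S) * ℵ₀ := by
      refine (Cardinal.mk_iUnion_le _).trans (mul_le_mul_right (ciSup_le' fun p => ?_) _)
      by_cases hpq : (p.1 : ℂ → ℂ) = p.2
      · have : {z : ℂ | (p.1 : ℂ → ℂ) z = (p.2 : ℂ → ℂ) z ∧ (p.1 : ℂ → ℂ) ≠ p.2} = ∅ := by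
          ext z; simp [hpq]
        simp [this]
      · have hc : Set.Countable {z : ℂ | (p.1 : ℂ → ℂ) z = (p.2 : ℂ → ℂ) z ∧
            (p.1 : ℂ → ℂ) ≠ p.2} := by
          refine Set.Countable.mono ?_ (countable_agreement (hdiff _ (hSF p.1.2))
            (hdiff _ (hSF p.2.2)) hpq)
          intro z hz; exact hz.1
        have := hc.to_subtype
        exact Cardinal.mk_le_aleph0
    have heq : #(S × S) * ℵ₀ = ℵ_ 1 := by
      simp only [Cardinal.mk_prod, Cardinal.lift_id, hS]
      rw [Cardinal.mul_eq_self (Cardinal.aleph0_le_aleph 1),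
        Cardinal.mul_eq_left (Cardinal.aleph0_le_aleph 1) Cardinal.aleph0_lt_aleph_one.le
          Cardinal.aleph0_ne_zero]
    rw [heq] at hle
    exact lt_of_le_of_lt hle hC0
  -- pick z outside B
  have hzB : ∃ z : ℂ, z ∉ B := by
    by_contra h
    push_neg at h
    have : B = Set.univ := Set.eq_univ_of_forall h
    rw [this] at hBsmall
    simp [mk_univ_complex] at hBsmall
  obtain ⟨z, hz⟩ := hzB
  -- eval at z is injective on S
  have hinj : Set.InjOn (fun f : ℂ → ℂ => f z) S := by
    intro f hf g hg hfg
    by_contra hne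
    apply hz
    rw [hB]
    exact Set.mem_iUnion.mpr ⟨(⟨f, hf⟩, ⟨g, hg⟩), hfg, hne⟩
  have himg : ¬ Set.Countable ((fun f : ℂ → ℂ => f z) '' S) := by
    rw [Cardinal.countable_iff_lt_aleph_one, not_lt]
    rw [Cardinal.mk_image_eq_of_injOn _ _ hinj, hS]
  exact himg ((hcount z).mono (Set.image_mono hSF))
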